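/- Let τ be a finite relational vocabulary, K a countable commutative semiring, and p: K⁺ → (0,1] a probability distribution on K⁺ = K∖{0}. Then for every atomic m-type ρ and every atomic (m+1)-type ρ⁺ extending ρ, the probability under μ_{n,p} that every realisation of ρ in a random K-interpretation π on [n] can be extended to a realisation of ρ⁺ converges to 1 as n → ∞, and the convergence is exponentially fast (the failure probability is bounded by n^m(1−c)^{n−m} for some constant c > 0). Moreover, if K is finite then for every fixed k, the probability under μ_{n,p} that a random K-interpretation has the k-extension property converges to 1 exponentially fast. -/

import Mathlib

open MeasureTheory Filter Set
open scoped ENNReal BigOperators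

/-- A (fully instantiated) literal over the relational vocabulary given by the
relation symbols `R` with arities `ar`, on the universe `A`: a relation symbol,
a tuple of arguments, and a polarity (`true` = positive atom, `false` = negated atom). -/
structure Lit (R : Type) (ar : R → ℕ) (A : Type) : Type where
  rel : R
  args : Fin (ar rel) → A
  pos : Bool

/-- A (fully instantiated) relational atom. -/
abbrev Atoms (R : Type) (ar : R → ℕ) (A : Type) : Type := (r : R) × (Fin (ar r) → A)

variable {R : Type} {ar : R → ℕ} {A B K : Type}

/-- Renaming of a literal along a map of universes. -/
def Lit.map (f : A → B) (l : Lit R ar A) : Lit R ar B :=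
  ⟨l.rel, fun j => f (l.args j), l.pos⟩

/-- A `K`-interpretation (or atomic type) is model-defining / consistent (w.r.t. the
zero element `z` of `K`) if out of each pair of complementary literals exactly one is
mapped to `z`. -/
def ModelDefining (z : K) (π : Lit R ar A → K) : Prop :=
  ∀ (r : R) (as : Fin (ar r) → A), (π ⟨r, as, true⟩ = z ↔ π ⟨r, as, false⟩ ≠ z)

/-- The atomic `m`-type realised by the tuple `a` in the interpretation `π`. -/
def typeOf {m : ℕ} (π : Lit R ar A → K) (a : Fin m → A) : Lit R ar (Fin m) → K :=
  fun l => π (l.map a)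

/-- The tuple `a` (of pairwise distinct elements) realises the atomic `m`-type `ρ` in `π`. -/
def Realizes {m : ℕ} (π : Lit R ar A → K) (a : Fin m → A) (ρ : Lit R ar (Fin m) → K) : Prop :=
  Function.Injective a ∧ typeOf π a = ρ

/-- The atomic `(m+1)`-type `ρp` extends the atomic `m`-type `ρ`. -/
def Extends {m : ℕ} (ρp : Lit R ar (Fin (m+1)) → K) (ρ : Lit R ar (Fin m) → K) : Prop :=
  ∀ l : Lit R ar (Fin m), ρp (l.map Fin.castSucc) = ρ l

/-- The `k`-extension property of an interpretation `π` (with zero element `z`). -/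
def ExtProp (z : K) (π : Lit R ar A → K) (k : ℕ) : Prop :=
  ∀ m, m < k → ∀ ρ : Lit R ar (Fin m) → K, ModelDefining z ρ →
    ∀ ρp : Lit R ar (Fin (m+1)) → K, ModelDefining z ρp → Extends ρp ρ →
      ∀ a : Fin m → A, Realizes π a ρ →
        ∃ b : A, b ∉ Set.range a ∧ Realizes π (Fin.snoc a b) ρp

/-- A sequence of extended nonnegative reals converges to `L` exponentially fast. -/
def ExpConv (f : ℕ → ℝ≥0∞) (L : ℝ≥0∞) : Prop :=
  ∃ C q : ℝ≥0∞, C ≠ ⊤ ∧ q < 1 ∧ ∀ n, f n ≤ L + C * q ^ n ∧ L ≤ f n + C * q ^ n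

/-- The interpretation determined by a sample point: each atom gets a pair
(value of positive literal, value of negated literal). -/
def interpOf (ω : Atoms R ar A → K × K) : Lit R ar A → K :=
  fun l => if l.pos then (ω ⟨l.rel, l.args⟩).1 else (ω ⟨l.rel, l.args⟩).2

/-- The per-atom distribution: with probability 1/2 the atom is true (its negation
gets value `z`, i.e. false, and its value is sampled from `p`), with probability 1/2
it is false (symmetrically). -/
noncomputable def atomMeasure [MeasurableSpace K] (z : K) (p : Measure K) : Measure (K × K) :=
  (2⁻¹ : ℝ≥0∞) • (Measure.map (fun j => (j, z)) p + Measure.map (fun j => (z, j)) p)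

/-- The distribution `μ_{n,p}` of random `K`-interpretations on universe `[n]`,
presented on the sample space assigning to each atom the pair of values of its
positive and negated literal. -/
noncomputable def muI [MeasurableSpace K] [Fintype R] (z : K) (p : Measure K) (n : ℕ) :
    Measure (Atoms R ar (Fin n) → K × K) :=
  Measure.pi fun _ => atomMeasure z p

section Helpers

/-- Renaming of an atom along a map of universes. -/
def amap (f : A → B) (q : Atoms R ar A) : Atoms R ar B := ⟨q.1, f ∘ q.2⟩

lemma amap_injective {f : A → B} (hf : Function.Injective f) :
    Function.Injective (amap (R := R) (ar := ar) f) := by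
  rintro ⟨r, as⟩ ⟨r', as'⟩ h
  simp only [amap, Sigma.mk.inj_iff] at h
  obtain ⟨rfl, h2⟩ := h
  rw [heq_iff_eq] at h2
  have : as = as' := funext fun j => hf (congrFun h2 j)
  subst this; rfl

lemma snoc_injective {m : ℕ} {α : Type*} {a : Fin m → α} {b : α}
    (ha : Function.Injective a) (hb : b ∉ Set.range a) :
    Function.Injective (Fin.snoc a b : Fin (m+1) → α) := by
  intro i j h
  induction i using Fin.lastCases with
  | last =>
    induction j using Fin.lastCases with
    | last => rfl
    | cast j => rw [Fin.snoc_last, Fin.snoc_castSucc] at h; exact absurd ⟨j, h.symm⟩ hb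
  | cast i =>
    induction j using Fin.lastCases with
    | last => rw [Fin.snoc_last, Fin.snoc_castSucc] at h; exact absurd ⟨i, h⟩ hb
    | cast j => rw [Fin.snoc_castSucc, Fin.snoc_castSucc] at h; rw [ha h]

lemma snoc_mem_range {m : ℕ} {α : Type*} (a : Fin m → α) (b : α) (i : Fin (m+1)) :
    (Fin.snoc a b : Fin (m+1) → α) i ∈ Set.range a ∪ {b} := by
  induction i using Fin.lastCases with
  | last => right; simp
  | cast i => left; rw [Fin.snoc_castSucc]; exact ⟨i, rfl⟩

instance litFinite [Finite R] [Finite A] : Finite (Lit R ar A) :=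
  Finite.of_injective (fun l => ((⟨l.rel, l.args⟩ : Atoms R ar A), l.pos))
    (by
      rintro ⟨r, a, pos⟩ ⟨r', a', pos'⟩ h
      simp only [Prod.mk.injEq, Sigma.mk.inj_iff] at h
      obtain ⟨⟨rfl, h2⟩, rfl⟩ := h
      rw [heq_iff_eq] at h2
      subst h2; rfl)

variable [Zero K] [MeasurableSpace K] [MeasurableSingletonClass K] [Countable K]

lemma atomMeasure_prob (p : Measure K) [IsProbabilityMeasure p] :
    IsProbabilityMeasure (atomMeasure (0 : K) p) := by
  constructor
  rw [atomMeasure, Measure.smul_apply, Measure.add_apply,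
    Measure.map_apply Measurable.of_discrete MeasurableSet.univ,
    Measure.map_apply Measurable.of_discrete MeasurableSet.univ]
  simp only [Set.preimage_univ, measure_univ, smul_eq_mul]
  rw [show (1 : ℝ≥0∞) + 1 = 2 by norm_num, ENNReal.inv_mul_cancel (by norm_num) (by norm_num)]

lemma atomMeasure_single_left (p : Measure K) (w : K) (hw : w ≠ 0) :
    atomMeasure (0 : K) p {((w, 0) : K × K)} = 2⁻¹ * p {w} := by
  rw [atomMeasure, Measure.smul_apply, Measure.add_apply,
    Measure.map_apply Measurable.of_discrete MeasurableSet.of_discrete,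
    Measure.map_apply Measurable.of_discrete MeasurableSet.of_discrete]
  have h1 : (fun j : K => (j, (0:K))) ⁻¹' {(w, 0)} = {w} := by
    ext j; simp [Prod.ext_iff]
  have h2 : (fun j : K => ((0:K), j)) ⁻¹' {(w, 0)} = ∅ := by
    ext j; simp [Prod.ext_iff]; intro h; exact absurd h.symm hw
  rw [h1, h2]
  simp

lemma atomMeasure_single_right (p : Measure K) (w : K) (hw : w ≠ 0) :
    atomMeasure (0 : K) p {((0, w) : K × K)} = 2⁻¹ * p {w} := by
  rw [atomMeasure, Measure.smul_apply, Measure.add_apply,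
    Measure.map_apply Measurable.of_discrete MeasurableSet.of_discrete,
    Measure.map_apply Measurable.of_discrete MeasurableSet.of_discrete]
  have h1 : (fun j : K => (j, (0:K))) ⁻¹' {(0, w)} = ∅ := by
    ext j; simp only [Set.mem_preimage, Set.mem_singleton_iff, Prod.ext_iff, Set.mem_empty_iff_false, iff_false, not_and]
    intro _ h; exact hw h.symm
  have h2 : (fun j : K => ((0:K), j)) ⁻¹' {(0, w)} = {w} := by
    ext j; simp [Prod.ext_iff]
  rw [h1, h2]
  simp

end Helpers

section PiIndep

variable {ι : Type*} [Fintype ι] {γ : Type*} [MeasurableSpace γ]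

/-- `A` depends only on coordinates in `J`. -/
def DepOn (A : Set (ι → γ)) (J : Set ι) : Prop :=
  ∀ ⦃f g : ι → γ⦄, (∀ i ∈ J, f i = g i) → (f ∈ A ↔ g ∈ A)

lemma DepOn.mono {A : Set (ι → γ)} {J J' : Set ι} (h : DepOn A J) (hJ : J ⊆ J') :
    DepOn A J' := fun f g hfg => h (fun i hi => hfg i (hJ hi))

lemma DepOn.compl {A : Set (ι → γ)} {J : Set ι} (h : DepOn A J) : DepOn Aᶜ J :=
  fun f g hfg => by simp [h hfg]

lemma DepOn.biInter {β : Type*} {T : Finset β} {E : β → Set (ι → γ)} {J : Set ι}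
    (h : ∀ b ∈ T, DepOn (E b) J) : DepOn (⋂ b ∈ T, E b) J := by
  intro f g hfg
  simp only [Set.mem_iInter]
  exact forall_congr' fun b => forall_congr' fun hb => h b hb hfg

variable (ν : Measure γ) [IsProbabilityMeasure ν]

lemma pi_box (J : Finset ι) (s : ι → Set γ) (hs : ∀ i, MeasurableSet (s i)) :
    Measure.pi (fun _ : ι => ν) {f : ι → γ | ∀ i ∈ J, f i ∈ s i} = ∏ i ∈ J, ν (s i) := by
  classical
  have hset : {f : ι → γ | ∀ i ∈ J, f i ∈ s i}
      = Set.pi Set.univ (fun i => if i ∈ J then s i else univ) := by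
    ext f
    simp only [mem_setOf_eq, Set.mem_pi, mem_univ, true_implies]
    constructor
    · intro h i; split_ifs with hi
      · exact h i hi
      · trivial
    · intro h i hi; have := h i; rwa [if_pos hi] at this
  rw [hset, Measure.pi_pi]
  rw [show (∏ i, ν (if i ∈ J then s i else univ)) = ∏ i, (if i ∈ J then ν (s i) else 1) by
    refine Finset.prod_congr rfl fun i _ => ?_
    split_ifs <;> simp [measure_univ]]
  rw [← Finset.prod_subset (Finset.subset_univ J) (fun i _ hi => by simp [hi])]
  exact Finset.prod_congr rfl fun i hi => by simp [hi]

lemma pi_indep (J : Set ι) {A B : Set (ι → γ)} (hA : MeasurableSet A) (hB : MeasurableSet B)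
    (hAd : DepOn A J) (hBd : DepOn B Jᶜ) :
    Measure.pi (fun _ : ι => ν) (A ∩ B)
      = Measure.pi (fun _ : ι => ν) A * Measure.pi (fun _ : ι => ν) B := by
  classical
  have hγ : Nonempty γ := by
    by_contra h
    have huniv : (Set.univ : Set γ) = ∅ := by
      ext x; exact absurd ⟨x⟩ h
    have h1 : (1 : ℝ≥0∞) = 0 := by rw [← measure_univ (μ := ν), huniv, measure_empty]
    norm_num at h1
  obtain ⟨c0⟩ := hγ
  set e := MeasurableEquiv.piEquivPiSubtypeProd (fun _ : ι => γ) (· ∈ J) with he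
  set ext1 : (∀ _ : {i // i ∈ J}, γ) → (ι → γ) :=
    fun g i => if h : i ∈ J then g ⟨i, h⟩ else c0 with hext1
  set ext2 : (∀ _ : {i // ¬ i ∈ J}, γ) → (ι → γ) :=
    fun g i => if h : ¬ i ∈ J then g ⟨i, h⟩ else c0 with hext2
  have hm1 : Measurable ext1 := by
    refine measurable_pi_lambda _ fun i => ?_
    by_cases h : i ∈ J <;> simp only [hext1, h, dif_pos, dif_neg, not_false_iff]
    · exact measurable_pi_apply _
    · exact measurable_const
  have hm2 : Measurable ext2 := by
    refine measurable_pi_lambda _ fun i => ?_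
    by_cases h : ¬ i ∈ J <;> simp only [hext2, h, dif_pos, dif_neg, not_false_iff, not_not]
    · exact measurable_pi_apply _
    · exact measurable_const
  set A' := ext1 ⁻¹' A with hA'
  set B' := ext2 ⁻¹' B with hB'
  have hmA' : MeasurableSet A' := hm1 hA
  have hmB' : MeasurableSet B' := hm2 hB
  have hfA : ∀ f : ι → γ, f ∈ A ↔ (e f).1 ∈ A' := by
    intro f
    refine hAd fun i hi => ?_
    simp only [hext1]
    rw [dif_pos hi]
    rfl
  have hfB : ∀ f : ι → γ, f ∈ B ↔ (e f).2 ∈ B' := by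
    intro f
    refine hBd fun i hi => ?_
    have hi' : ¬ i ∈ J := hi
    simp only [hext2]
    rw [dif_pos hi']
    rfl
  have hmp := measurePreserving_piEquivPiSubtypeProd (fun _ : ι => ν) (· ∈ J)
  have key : ∀ (S : Set (∀ _ : {i // i ∈ J}, γ)) (T : Set (∀ _ : {i // ¬ i ∈ J}, γ)),
      MeasurableSet S → MeasurableSet T →
      Measure.pi (fun _ : ι => ν) (e ⁻¹' (S ×ˢ T))
        = (Measure.pi fun _ : {i // i ∈ J} => ν) S * (Measure.pi fun _ : {i // ¬ i ∈ J} => ν) T := by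
    intro S T hS hT
    rw [hmp.measure_preimage (hS.prod hT).nullMeasurableSet, Measure.prod_prod]
  have eA : A = e ⁻¹' (A' ×ˢ univ) := by
    ext f; simp only [Set.mem_preimage, Set.mem_prod, Set.mem_univ, and_true]
    exact hfA f
  have eB : B = e ⁻¹' (univ ×ˢ B') := by
    ext f; simp only [Set.mem_preimage, Set.mem_prod, Set.mem_univ, true_and]
    exact hfB f
  have eAB : A ∩ B = e ⁻¹' (A' ×ˢ B') := by
    ext f; simp only [Set.mem_inter_iff, Set.mem_preimage, Set.mem_prod]
    exact and_congr (hfA f) (hfB f)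
  rw [eAB, eA, eB, key _ _ hmA' hmB', key _ _ hmA' MeasurableSet.univ,
    key _ _ MeasurableSet.univ hmB']
  simp [measure_univ]

end PiIndep

section PiIndep2

variable {ι : Type*} [Fintype ι] {γ : Type*} [MeasurableSpace γ]
variable (ν : Measure γ) [IsProbabilityMeasure ν]

/-- Measure of a box described via an injection into the coordinates. -/
lemma pi_box_inj {β : Type*} {e : β → ι} (he : Function.Injective e) (J : Finset β)
    (s : β → Set γ) (hs : ∀ q, MeasurableSet (s q)) :
    Measure.pi (fun _ : ι => ν) {f : ι → γ | ∀ q ∈ J, f (e q) ∈ s q} = ∏ q ∈ J, ν (s q) := by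
  classical
  induction J using Finset.induction with
  | empty => simp
  | @insert q0 J hq0 ih =>
    have hsplit : {f : ι → γ | ∀ q ∈ insert q0 J, f (e q) ∈ s q}
        = {f : ι → γ | ∀ i ∈ ({e q0} : Finset ι), f i ∈ s q0}
          ∩ {f : ι → γ | ∀ q ∈ J, f (e q) ∈ s q} := by
      ext f
      simp only [Set.mem_inter_iff, mem_setOf_eq, Finset.mem_insert, Finset.mem_singleton]
      constructor
      · intro h
        exact ⟨fun i hi => hi ▸ h q0 (Or.inl rfl), fun q hq => h q (Or.inr hq)⟩
      · rintro ⟨h1, h2⟩ q (rfl | hq)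
        · exact h1 _ rfl
        · exact h2 q hq
    have hd1 : DepOn {f : ι → γ | ∀ i ∈ ({e q0} : Finset ι), f i ∈ s q0}
        ({e q0} : Set ι) := by
      intro f g hfg
      simp only [mem_setOf_eq, Finset.mem_singleton]
      constructor
      · intro h i hi; subst hi; rw [← hfg (e q0) rfl]; exact h _ rfl
      · intro h i hi; subst hi; rw [hfg (e q0) rfl]; exact h _ rfl
    have hd2 : DepOn {f : ι → γ | ∀ q ∈ J, f (e q) ∈ s q} (({e q0} : Set ι)ᶜ) := by
      intro f g hfg
      simp only [mem_setOf_eq]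
      refine forall_congr' fun q => forall_congr' fun hq => ?_
      rw [hfg (e q) (by simp; exact fun h => hq0 (he h ▸ hq))]
    have hm1 : MeasurableSet {f : ι → γ | ∀ i ∈ ({e q0} : Finset ι), f i ∈ s q0} := by
      simp only [Finset.mem_singleton]
      have : {f : ι → γ | ∀ i, i = e q0 → f i ∈ s q0} = (fun f : ι → γ => f (e q0)) ⁻¹' s q0 := by
        ext f; simp
      rw [this]
      exact (measurable_pi_apply _) (hs q0)
    have hm2 : MeasurableSet {f : ι → γ | ∀ q ∈ J, f (e q) ∈ s q} := by
      have : {f : ι → γ | ∀ q ∈ J, f (e q) ∈ s q} = ⋂ q ∈ J, (fun f : ι → γ => f (e q)) ⁻¹' s q := by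
        ext f; simp
      rw [this]
      exact Finset.measurableSet_biInter _ fun q _ => (measurable_pi_apply _) (hs q)
    rw [hsplit, pi_indep ν _ hm1 hm2 hd1 hd2, ih, pi_box ν _ _ (fun _ => hs q0),
      Finset.prod_insert hq0, Finset.prod_singleton]

/-- Intersection of complements of independent events of probability `c`. -/
lemma pi_inter_compl_le {β : Type*} (T : Finset β) (E : β → Set (ι → γ)) (S : β → Set ι)
    (c : ℝ≥0∞)
    (hmeas : ∀ b, MeasurableSet (E b))
    (hdep : ∀ b, DepOn (E b) (S b))
    (hdisj : ∀ b ∈ T, ∀ b' ∈ T, b ≠ b' → Disjoint (S b) (S b'))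
    (hval : ∀ b ∈ T, Measure.pi (fun _ : ι => ν) (E b) = c) :
    Measure.pi (fun _ : ι => ν) (⋂ b ∈ T, (E b)ᶜ) ≤ (1 - c) ^ T.card := by
  classical
  induction T using Finset.induction with
  | empty => simp
  | @insert b0 T hb0 ih =>
    have hsub : (⋂ b ∈ insert b0 T, (E b)ᶜ) = (E b0)ᶜ ∩ ⋂ b ∈ T, (E b)ᶜ := by
      simp
    have hd1 : DepOn (E b0)ᶜ (S b0) := (hdep b0).compl
    have hd2 : DepOn (⋂ b ∈ T, (E b)ᶜ) ((S b0)ᶜ) := by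
      refine DepOn.biInter fun b hb => ((hdep b).compl).mono ?_
      exact Set.subset_compl_iff_disjoint_left.mpr
        (hdisj b0 (Finset.mem_insert_self _ _) b (Finset.mem_insert_of_mem hb)
          (fun h => hb0 (h ▸ hb)))
    have hm2 : MeasurableSet (⋂ b ∈ T, (E b)ᶜ) :=
      Finset.measurableSet_biInter _ fun b _ => (hmeas b).compl
    rw [hsub, pi_indep ν _ (hmeas b0).compl hm2 hd1 hd2]
    have h1 : Measure.pi (fun _ : ι => ν) (E b0)ᶜ = 1 - c := by
      rw [prob_compl_eq_one_sub (hmeas b0), hval b0 (Finset.mem_insert_self _ _)]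
    rw [h1, Finset.card_insert_of_notMem hb0, pow_succ]
    rw [mul_comm ((1-c)^T.card)]
    exact mul_le_mul_right (ih (fun b hb b' hb' hne =>
      hdisj b (Finset.mem_insert_of_mem hb) b' (Finset.mem_insert_of_mem hb') hne)
      (fun b hb => hval b (Finset.mem_insert_of_mem hb))) _

end PiIndep2

lemma geom_bound (m : ℕ) {r : ℝ≥0∞} (hr : r < 1) :
    ∃ C q : ℝ≥0∞, C ≠ ⊤ ∧ q < 1 ∧ ∀ n : ℕ, (n : ℝ≥0∞) ^ m * r ^ (n - m) ≤ C * q ^ n := by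
  rcases eq_or_ne r 0 with rfl | hr0
  · refine ⟨(m : ℝ≥0∞) ^ m * 2 ^ m, 2⁻¹, ?_, ?_, ?_⟩
    · exact ENNReal.mul_ne_top (by simp) (by simp)
    · simp [ENNReal.inv_lt_one]
    · intro n
      rcases le_or_gt n m with hnm | hnm
      · have h0 : (0 : ℝ≥0∞) ^ (n - m) = 1 := by
          rw [Nat.sub_eq_zero_of_le hnm, pow_zero]
        rw [h0, mul_one]
        have h1 : (n : ℝ≥0∞) ^ m ≤ (m : ℝ≥0∞) ^ m :=
          pow_le_pow_left₀ zero_le (by exact_mod_cast hnm) m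
        have h2 : (1 : ℝ≥0∞) ≤ 2 ^ m * 2⁻¹ ^ n := by
          rw [← ENNReal.inv_pow]
          have h3 : (2 : ℝ≥0∞) ^ n ≤ 2 ^ m := pow_le_pow_right₀ (by norm_num) hnm
          calc (1 : ℝ≥0∞) = 2 ^ n * (2 ^ n)⁻¹ := by
                rw [ENNReal.mul_inv_cancel (by positivity) (by simp)]
            _ ≤ 2 ^ m * (2 ^ n)⁻¹ := mul_le_mul_left h3 _
        calc (n : ℝ≥0∞) ^ m ≤ (m : ℝ≥0∞) ^ m := h1
          _ = (m : ℝ≥0∞) ^ m * 1 := (mul_one _).symm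
          _ ≤ (m : ℝ≥0∞) ^ m * (2 ^ m * 2⁻¹ ^ n) := mul_le_mul_right h2 _
          _ = (m : ℝ≥0∞) ^ m * 2 ^ m * 2⁻¹ ^ n := by ring
      · have h0 : (0 : ℝ≥0∞) ^ (n - m) = 0 := by
          rw [zero_pow]; omega
        rw [h0, mul_zero]
        exact zero_le
  · have hrtop : r ≠ ⊤ := hr.ne_top
    set s := r.toReal with hs
    have hs0 : 0 < s := ENNReal.toReal_pos hr0 hrtop
    have hs1 : s < 1 := by
      have := ENNReal.toReal_lt_toReal hrtop (by norm_num : (1:ℝ≥0∞) ≠ ⊤) |>.mpr hr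
      simpa using this
    set y : ℝ := (s + 1) / 2 with hy
    have hy0 : 0 < y := by positivity
    have hsy : s < y := by rw [hy]; linarith
    have hy1 : y < 1 := by rw [hy]; linarith
    set x : ℝ := s / y with hx
    have hx0 : 0 < x := by positivity
    have hx1 : x < 1 := (div_lt_one hy0).mpr hsy
    have hsum : Summable (fun n : ℕ => (n : ℝ) ^ m * x ^ n) :=
      summable_pow_mul_geometric_of_norm_lt_one m
        (by rw [Real.norm_eq_abs, abs_of_pos hx0]; exact hx1)
    obtain ⟨M, hM⟩ := hsum.tendsto_atTop_zero.bddAbove_range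
    have hMb : ∀ n : ℕ, (n : ℝ) ^ m * x ^ n ≤ M := fun n => hM ⟨n, rfl⟩
    have hM0 : 0 ≤ M := le_trans (by positivity) (hMb 0)
    refine ⟨ENNReal.ofReal M * (r⁻¹) ^ m, ENNReal.ofReal y, ?_, ?_, ?_⟩
    · exact ENNReal.mul_ne_top ENNReal.ofReal_ne_top
        (by simp [ENNReal.inv_ne_top.mpr hr0, ENNReal.pow_ne_top])
    · exact ENNReal.ofReal_lt_one.mpr hy1
    · intro n
      have step1 : r ^ (n - m) ≤ (r⁻¹) ^ m * r ^ n := by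
        rcases le_or_gt m n with hmn | hmn
        · have : (r⁻¹) ^ m * r ^ n = r ^ (n - m) := by
            rw [show n = (n - m) + m by omega, pow_add]
            rw [← mul_assoc, mul_comm ((r⁻¹)^m), mul_assoc, ← mul_pow,
              ENNReal.inv_mul_cancel hr0 hrtop, one_pow, mul_one]
            rw [Nat.add_sub_cancel]
          rw [this]
        · rw [Nat.sub_eq_zero_of_le hmn.le, pow_zero]
          calc (1 : ℝ≥0∞) = (r⁻¹ * r) ^ n := by
                rw [ENNReal.inv_mul_cancel hr0 hrtop, one_pow]
            _ = (r⁻¹) ^ n * r ^ n := mul_pow _ _ _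
            _ ≤ (r⁻¹) ^ m * r ^ n := by
                refine mul_le_mul_left (pow_le_pow_right₀ ?_ hmn.le) _
                exact ENNReal.one_le_inv.mpr hr.le
      have step2 : (n : ℝ≥0∞) ^ m * r ^ n ≤ ENNReal.ofReal M * ENNReal.ofReal y ^ n := by
        have hrs : r = ENNReal.ofReal s := (ENNReal.ofReal_toReal hrtop).symm
        have hxy : s = x * y := by rw [hx]; field_simp
        have hcast : (n : ℝ≥0∞) ^ m * r ^ n = ENNReal.ofReal ((n : ℝ) ^ m * s ^ n) := by
          rw [hrs, ENNReal.ofReal_mul (by positivity), ENNReal.ofReal_pow (by positivity),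
            ENNReal.ofReal_pow hs0.le, ENNReal.ofReal_natCast]
        rw [hcast]
        have hle : (n : ℝ) ^ m * s ^ n ≤ M * y ^ n := by
          rw [hxy, mul_pow, ← mul_assoc]
          exact mul_le_mul_of_nonneg_right (hMb n) (by positivity)
        calc ENNReal.ofReal ((n : ℝ) ^ m * s ^ n) ≤ ENNReal.ofReal (M * y ^ n) :=
              ENNReal.ofReal_le_ofReal hle
          _ = ENNReal.ofReal M * ENNReal.ofReal y ^ n := by
              rw [ENNReal.ofReal_mul hM0, ENNReal.ofReal_pow hy0.le]
      calc (n : ℝ≥0∞) ^ m * r ^ (n - m) ≤ (n : ℝ≥0∞) ^ m * ((r⁻¹) ^ m * r ^ n) :=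
            mul_le_mul_right step1 _
        _ = (r⁻¹) ^ m * ((n : ℝ≥0∞) ^ m * r ^ n) := by ring
        _ ≤ (r⁻¹) ^ m * (ENNReal.ofReal M * ENNReal.ofReal y ^ n) := mul_le_mul_right step2 _
        _ = ENNReal.ofReal M * (r⁻¹) ^ m * ENNReal.ofReal y ^ n := by ring

section MainBound

variable {R : Type} [Fintype R] {ar : R → ℕ}
variable {K : Type} [CommSemiring K] [Countable K]
variable [MeasurableSpace K] [MeasurableSingletonClass K]

/-- Key deterministic lemma: if `a` realises `ρ` and all atoms involving `b` have the
values prescribed by `ρp`, then `(a, b)` realises `ρp`. -/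
lemma realizes_snoc {m n : ℕ} (ρ : Lit R ar (Fin m) → K)
    (ρp : Lit R ar (Fin (m+1)) → K) (hext : Extends ρp ρ)
    (ω : Atoms R ar (Fin n) → K × K) (a : Fin m → Fin n) (b : Fin n)
    (hb : b ∉ Set.range a) (hra : Realizes (interpOf ω) a ρ)
    (hE : ∀ q : Atoms R ar (Fin (m+1)), (∃ j, q.2 j = Fin.last m) →
      ω (amap (Fin.snoc a b) q) = (ρp ⟨q.1, q.2, true⟩, ρp ⟨q.1, q.2, false⟩)) :
    Realizes (interpOf ω) (Fin.snoc a b) ρp := by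
  obtain ⟨ha, hta⟩ := hra
  refine ⟨snoc_injective ha hb, ?_⟩
  funext l
  obtain ⟨r, as, pos⟩ := l
  by_cases hl : ∃ j, as j = Fin.last m
  · have h : ω ⟨r, fun j => (Fin.snoc a b : Fin (m+1) → Fin n) (as j)⟩
        = (ρp ⟨r, as, true⟩, ρp ⟨r, as, false⟩) := hE ⟨r, as⟩ hl
    cases pos
    · show (ω ⟨r, fun j => (Fin.snoc a b : Fin (m+1) → Fin n) (as j)⟩).2 = _
      rw [h]
    · show (ω ⟨r, fun j => (Fin.snoc a b : Fin (m+1) → Fin n) (as j)⟩).1 = _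
      rw [h]
  · push_neg at hl
    set l' : Lit R ar (Fin m) := ⟨r, fun j => (as j).castPred (hl j), pos⟩ with hl'
    have hmap : Lit.map Fin.castSucc l' = ⟨r, as, pos⟩ := by
      show Lit.mk r (fun j => Fin.castSucc ((as j).castPred (hl j))) pos = ⟨r, as, pos⟩
      have harg : (fun j => Fin.castSucc ((as j).castPred (hl j))) = as :=
        funext fun j => Fin.castSucc_castPred _ (hl j)
      rw [harg]
    have h1 : Lit.map (Fin.snoc a b) (⟨r, as, pos⟩ : Lit R ar (Fin (m+1))) = Lit.map a l' := by
      show Lit.mk r (fun j => (Fin.snoc a b : Fin (m+1) → Fin n) (as j)) pos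
        = Lit.mk r (fun j => a ((as j).castPred (hl j))) pos
      have harg : (fun j => (Fin.snoc a b : Fin (m+1) → Fin n) (as j))
          = (fun j => a ((as j).castPred (hl j))) := by
        funext j
        have hj := hl j
        obtain ⟨y, hy⟩ : ∃ y : Fin m, as j = y.castSucc :=
          ⟨(as j).castPred hj, (Fin.castSucc_castPred _ _).symm⟩
        have hcp : ((as j).castPred hj : Fin m) = y := by
          apply Fin.castSucc_injective
          rw [Fin.castSucc_castPred, hy]
        rw [hcp, hy, Fin.snoc_castSucc]
      rw [harg]
    show interpOf ω (Lit.map (Fin.snoc a b) ⟨r, as, pos⟩) = _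
    rw [h1, ← hmap, hext l']
    exact congrFun hta l'

theorem main_bound
    (p : Measure K) [IsProbabilityMeasure p]
    (hppos : ∀ j : K, j ≠ 0 → 0 < p {j})
    {m : ℕ} (ρ : Lit R ar (Fin m) → K)
    (ρp : Lit R ar (Fin (m+1)) → K) (hρp : ModelDefining (0 : K) ρp)
    (hext : Extends ρp ρ) :
    ∃ c : ℝ≥0∞, 0 < c ∧ c ≤ 1 ∧ ∀ n : ℕ,
      muI (ar := ar) (0 : K) p n
          {ω | ¬ ∀ a : Fin m → Fin n, Realizes (interpOf ω) a ρ →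
              ∃ b : Fin n, b ∉ Set.range a ∧ Realizes (interpOf ω) (Fin.snoc a b) ρp}
        ≤ (n : ℝ≥0∞) ^ m * (1 - c) ^ (n - m) := by
  classical
  haveI : IsProbabilityMeasure (atomMeasure (0 : K) p) := atomMeasure_prob p
  set ν := atomMeasure (0 : K) p with hν
  set valp : Atoms R ar (Fin (m+1)) → K × K :=
    fun q => (ρp ⟨q.1, q.2, true⟩, ρp ⟨q.1, q.2, false⟩) with hvalp
  set Λ : Finset (Atoms R ar (Fin (m+1))) :=
    Finset.univ.filter (fun q => ∃ j, q.2 j = Fin.last m) with hΛ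
  have hνval : ∀ q : Atoms R ar (Fin (m+1)), 0 < ν {valp q} := by
    intro q
    have hmd := hρp q.1 q.2
    by_cases h : ρp ⟨q.1, q.2, true⟩ = 0
    · have hw : ρp ⟨q.1, q.2, false⟩ ≠ 0 := hmd.mp h
      have : valp q = (0, ρp ⟨q.1, q.2, false⟩) := by rw [hvalp]; simp [h]
      rw [this, hν, atomMeasure_single_right p _ hw]
      exact ENNReal.mul_pos (by norm_num) (hppos _ hw).ne'
    · have hz : ρp ⟨q.1, q.2, false⟩ = 0 := by
        by_contra hz
        exact h (hmd.mpr hz)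
      have : valp q = (ρp ⟨q.1, q.2, true⟩, 0) := by rw [hvalp]; simp [hz]
      rw [this, hν, atomMeasure_single_left p _ h]
      exact ENNReal.mul_pos (by norm_num) (hppos _ h).ne'
  set c : ℝ≥0∞ := ∏ q ∈ Λ, ν {valp q} with hc
  have hc0 : 0 < c := CanonicallyOrderedAdd.prod_pos.mpr fun q _ => hνval q
  have hc1 : c ≤ 1 := Finset.prod_le_one (fun _ _ => zero_le) (fun q _ => prob_le_one)
  refine ⟨c, hc0, hc1, fun n => ?_⟩
  set E : (Fin m → Fin n) → Fin n → Set (Atoms R ar (Fin n) → K × K) :=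
    fun a b => {ω | ∀ q ∈ Λ, ω (amap (Fin.snoc a b) q) = valp q} with hE
  set Bad : (Fin m → Fin n) → Set (Atoms R ar (Fin n) → K × K) :=
    fun a => {ω | Realizes (interpOf ω) a ρ ∧
      ∀ b : Fin n, b ∉ Set.range a → ¬ Realizes (interpOf ω) (Fin.snoc a b) ρp} with hBad
  -- Step A : the failure event is contained in the union of the Bad a
  have hsubU : {ω : Atoms R ar (Fin n) → K × K |
      ¬ ∀ a : Fin m → Fin n, Realizes (interpOf ω) a ρ →
        ∃ b : Fin n, b ∉ Set.range a ∧ Realizes (interpOf ω) (Fin.snoc a b) ρp}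
      ⊆ ⋃ a : Fin m → Fin n, Bad a := by
    intro ω hω
    simp only [mem_setOf_eq] at hω
    push_neg at hω
    obtain ⟨a, hra, hfail⟩ := hω
    exact Set.mem_iUnion.mpr ⟨a, hra, hfail⟩
  -- Step B : each Bad a has small probability
  have hBadBound : ∀ a : Fin m → Fin n,
      muI (ar := ar) (0 : K) p n (Bad a) ≤ (1 - c) ^ (n - m) := by
    intro a
    by_cases ha : Function.Injective a
    · set T : Finset (Fin n) := Finset.univ.filter (fun b => b ∉ Set.range a) with hT
      have hsub2 : Bad a ⊆ ⋂ b ∈ T, (E a b)ᶜ := by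
        intro ω hω
        obtain ⟨hra, hfail⟩ := hω
        simp only [Set.mem_iInter]
        intro b hb
        have hbr : b ∉ Set.range a := by
          rw [hT] at hb; simpa using hb
        intro hωE
        refine hfail b hbr ?_
        refine realizes_snoc ρ ρp hext ω a b hbr hra fun q hq => ?_
        have hqΛ : q ∈ Λ := by
          rw [hΛ]
          simp only [Finset.mem_filter, Finset.mem_univ, true_and]
          exact hq
        exact hωE q hqΛ
      have hcard : T.card = n - m := by
        have hT2 : T = Finset.univ \ Finset.image a Finset.univ := by
          ext b
          simp [hT, Set.mem_range, eq_comm]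
        rw [hT2, Finset.card_sdiff_of_subset (Finset.subset_univ _), Finset.card_univ,
          Finset.card_image_of_injective _ ha, Finset.card_univ]
        simp
      have hmeas : ∀ b, MeasurableSet (E a b) := by
        intro b
        have : E a b = ⋂ q ∈ Λ, (fun ω : Atoms R ar (Fin n) → K × K =>
            ω (amap (Fin.snoc a b) q)) ⁻¹' {valp q} := by
          ext ω; simp [hE]
        rw [this]
        exact Finset.measurableSet_biInter _ fun q _ =>
          (measurable_pi_apply _) MeasurableSet.of_discrete
      have hdep : ∀ b, DepOn (E a b) ((amap (Fin.snoc a b) : Atoms R ar (Fin (m+1)) → _) '' ↑Λ) := by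
        intro b f g hfg
        simp only [hE, mem_setOf_eq]
        refine forall_congr' fun q => forall_congr' fun hq => ?_
        rw [hfg _ ⟨q, by simpa using hq, rfl⟩]
      have hdisj : ∀ b ∈ T, ∀ b' ∈ T, b ≠ b' →
          Disjoint ((amap (Fin.snoc a b) : Atoms R ar (Fin (m+1)) → _) '' ↑Λ)
            ((amap (Fin.snoc a b') : Atoms R ar (Fin (m+1)) → _) '' ↑Λ) := by
        intro b hb b' hb' hne
        have hbr : b ∉ Set.range a := by rw [hT] at hb; simpa using hb
        have hbr' : b' ∉ Set.range a := by rw [hT] at hb'; simpa using hb'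
        rw [Set.disjoint_left]
        rintro x ⟨q, hq, rfl⟩ ⟨q', hq', hxq⟩
        have hqΛ : ∃ j, q.2 j = Fin.last m := by
          have := hq; rw [hΛ] at this; simpa using this
        obtain ⟨j, hj⟩ := hqΛ
        -- b occurs among the arguments of the common atom
        have hbx : b ∈ Set.range (amap (Fin.snoc a b) q).2 := by
          refine ⟨j, ?_⟩
          show (Fin.snoc a b : Fin (m+1) → Fin n) (q.2 j) = b
          rw [hj, Fin.snoc_last]
        rw [← hxq] at hbx
        obtain ⟨i, hi⟩ := hbx
        have : (Fin.snoc a b' : Fin (m+1) → Fin n) (q'.2 i) = b := hi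
        have hmem := snoc_mem_range a b' (q'.2 i)
        rw [this] at hmem
        rcases hmem with h | h
        · exact hbr h
        · exact hne (Set.mem_singleton_iff.mp h)
      have hval : ∀ b ∈ T, muI (ar := ar) (0 : K) p n (E a b) = c := by
        intro b hb
        have hbr : b ∉ Set.range a := by rw [hT] at hb; simpa using hb
        have : E a b = {ω : Atoms R ar (Fin n) → K × K |
            ∀ q ∈ Λ, ω (amap (Fin.snoc a b) q) ∈ ({valp q} : Set (K × K))} := by
          ext ω; simp [hE]
        rw [muI, this,
          pi_box_inj ν (amap_injective (snoc_injective ha hbr)) Λ _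
            (fun q => MeasurableSet.of_discrete)]
      calc muI (ar := ar) (0 : K) p n (Bad a)
          ≤ muI (ar := ar) (0 : K) p n (⋂ b ∈ T, (E a b)ᶜ) := measure_mono hsub2
        _ ≤ (1 - c) ^ T.card := pi_inter_compl_le ν T (E a) _ c hmeas hdep hdisj hval
        _ = (1 - c) ^ (n - m) := by rw [hcard]
    · have : Bad a = ∅ := by
        ext ω
        simp only [hBad, mem_setOf_eq, Set.mem_empty_iff_false, iff_false, not_and]
        intro hra
        exact absurd hra.1 ha
      rw [this, measure_empty]
      exact zero_le
  -- Step C : union bound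
  calc muI (ar := ar) (0 : K) p n _
      ≤ muI (ar := ar) (0 : K) p n (⋃ a : Fin m → Fin n, Bad a) := measure_mono hsubU
    _ ≤ ∑' a : Fin m → Fin n, muI (ar := ar) (0 : K) p n (Bad a) := measure_iUnion_le _
    _ ≤ ∑' _ : Fin m → Fin n, (1 - c) ^ (n - m) := ENNReal.tsum_le_tsum hBadBound
    _ = (Fintype.card (Fin m → Fin n) : ℝ≥0∞) * (1 - c) ^ (n - m) := by
        rw [tsum_fintype]
        simp [Finset.sum_const, nsmul_eq_mul]
    _ = (n : ℝ≥0∞) ^ m * (1 - c) ^ (n - m) := by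
        congr 1
        rw [Fintype.card_fun]
        simp

end MainBound

lemma expConv_of_bound (f g : ℕ → ℝ≥0∞) (hf1 : ∀ n, f n ≤ 1) (hfg : ∀ n, 1 ≤ f n + g n)
    {C q : ℝ≥0∞} (hC : C ≠ ⊤) (hq : q < 1) (hb : ∀ n, g n ≤ C * q ^ n) : ExpConv f 1 :=
  ⟨C, q, hC, hq, fun n => ⟨le_trans (hf1 n) le_self_add,
    le_trans (hfg n) (add_le_add_right (hb n) _)⟩⟩

/-- For a finite relational vocabulary, a countable commutative
semiring `K` and a probability distribution `p` on `K⁺ = K ∖ {0}` (positive on every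
nonzero element), the probability that every realisation of an atomic `m`-type `ρ`
in a random `K`-interpretation on `[n]` can be extended to a realisation of a given
extension `ρ⁺` converges to 1, exponentially fast: the failure probability is bounded
by `n^m (1-c)^(n-m)` for some constant `c > 0`.  Moreover, if `K` is finite then for
every fixed `k`, random `K`-interpretations have the `k`-extension property with
probability converging to 1 exponentially fast. -/
theorem statement_0
    {R : Type} [Fintype R] {ar : R → ℕ}
    {K : Type} [CommSemiring K] [Countable K]
    [MeasurableSpace K] [MeasurableSingletonClass K]
    (p : Measure K) [IsProbabilityMeasure p]
    (hp0 : p {(0 : K)} = 0) (hppos : ∀ j : K, j ≠ 0 → 0 < p {j})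
    {m : ℕ} (ρ : Lit R ar (Fin m) → K) (hρ : ModelDefining (0 : K) ρ)
    (ρp : Lit R ar (Fin (m+1)) → K) (hρp : ModelDefining (0 : K) ρp)
    (hext : Extends ρp ρ) :
    (∃ c : ℝ≥0∞, 0 < c ∧ c ≤ 1 ∧ ∀ n : ℕ,
      muI (ar := ar) (0 : K) p n
          {ω | ¬ ∀ a : Fin m → Fin n, Realizes (interpOf ω) a ρ →
              ∃ b : Fin n, b ∉ Set.range a ∧ Realizes (interpOf ω) (Fin.snoc a b) ρp}
        ≤ (n : ℝ≥0∞) ^ m * (1 - c) ^ (n - m)) ∧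
    ExpConv (fun n =>
      muI (ar := ar) (0 : K) p n
        {ω | ∀ a : Fin m → Fin n, Realizes (interpOf ω) a ρ →
            ∃ b : Fin n, b ∉ Set.range a ∧ Realizes (interpOf ω) (Fin.snoc a b) ρp}) 1 ∧
    (Finite K → ∀ k : ℕ,
      ExpConv (fun n =>
        muI (ar := ar) (0 : K) p n {ω | ExtProp (0 : K) (interpOf ω) k}) 1) := by
  classical
  haveI : IsProbabilityMeasure (atomMeasure (0 : K) p) := atomMeasure_prob p
  haveI hPM : ∀ n : ℕ, IsProbabilityMeasure (muI (ar := ar) (0 : K) p n) := by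
    intro n; rw [muI]; infer_instance
  obtain ⟨c, hc0, hc1, hbound⟩ := main_bound p hppos ρ ρp hρp hext
  refine ⟨⟨c, hc0, hc1, hbound⟩, ?_, ?_⟩
  · -- exponential convergence for the fixed pair (ρ, ρp)
    have hr : (1 : ℝ≥0∞) - c < 1 :=
      ENNReal.sub_lt_self (by norm_num) (by norm_num) hc0.ne'
    obtain ⟨C, q, hC, hq, hCq⟩ := geom_bound m hr
    refine expConv_of_bound _
      (fun n => muI (ar := ar) (0 : K) p n
        {ω | ¬ ∀ a : Fin m → Fin n, Realizes (interpOf ω) a ρ →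
            ∃ b : Fin n, b ∉ Set.range a ∧ Realizes (interpOf ω) (Fin.snoc a b) ρp})
      (fun n => prob_le_one) (fun n => ?_) hC hq (fun n => (hbound n).trans (hCq n))
    calc (1 : ℝ≥0∞) = muI (ar := ar) (0 : K) p n Set.univ := measure_univ.symm
      _ ≤ muI (ar := ar) (0 : K) p n
            ({ω | ∀ a : Fin m → Fin n, Realizes (interpOf ω) a ρ →
              ∃ b : Fin n, b ∉ Set.range a ∧ Realizes (interpOf ω) (Fin.snoc a b) ρp}
            ∪ {ω | ¬ ∀ a : Fin m → Fin n, Realizes (interpOf ω) a ρ →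
              ∃ b : Fin n, b ∉ Set.range a ∧ Realizes (interpOf ω) (Fin.snoc a b) ρp}) := by
          refine measure_mono fun ω _ => ?_
          by_cases h : ∀ a : Fin m → Fin n, Realizes (interpOf ω) a ρ →
              ∃ b : Fin n, b ∉ Set.range a ∧ Realizes (interpOf ω) (Fin.snoc a b) ρp
          · exact Or.inl h
          · exact Or.inr h
      _ ≤ _ := measure_union_le _ _
  · -- the k-extension property for finite K
    intro hK k
    haveI : Fintype K := Fintype.ofFinite K
    set I := Σ m' : Fin k,
      ((Lit R ar (Fin (m' : ℕ)) → K) × (Lit R ar (Fin ((m' : ℕ)+1)) → K)) with hI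
    haveI : Finite I := by infer_instance
    haveI : Fintype I := Fintype.ofFinite I
    set G : I → (n : ℕ) → Set (Atoms R ar (Fin n) → K × K) := fun i n =>
      {ω | ModelDefining (0 : K) i.2.1 ∧ ModelDefining (0 : K) i.2.2 ∧ Extends i.2.2 i.2.1 ∧
        ¬ ∀ a : Fin (i.1 : ℕ) → Fin n, Realizes (interpOf ω) a i.2.1 →
          ∃ b : Fin n, b ∉ Set.range a ∧ Realizes (interpOf ω) (Fin.snoc a b) i.2.2} with hG
    have hGb : ∀ i : I, ∃ C q : ℝ≥0∞, C ≠ ⊤ ∧ q < 1 ∧ ∀ n,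
        muI (ar := ar) (0 : K) p n (G i n) ≤ C * q ^ n := by
      intro i
      by_cases hP : ModelDefining (0 : K) i.2.1 ∧ ModelDefining (0 : K) i.2.2 ∧
          Extends i.2.2 i.2.1
      · obtain ⟨h1, h2, h3⟩ := hP
        obtain ⟨c', hc0', hc1', hbound'⟩ := main_bound p hppos i.2.1 i.2.2 h2 h3
        have hr' : (1 : ℝ≥0∞) - c' < 1 :=
          ENNReal.sub_lt_self (by norm_num) (by norm_num) hc0'.ne'
        obtain ⟨C, q, hC, hq, hCq⟩ := geom_bound (i.1 : ℕ) hr'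
        refine ⟨C, q, hC, hq, fun n => ?_⟩
        refine le_trans (measure_mono fun ω hω => ?_) ((hbound' n).trans (hCq n))
        exact hω.2.2.2
      · refine ⟨0, 2⁻¹, by norm_num, by norm_num, fun n => ?_⟩
        have hempty : G i n = ∅ := by
          ext ω
          simp only [hG, mem_setOf_eq, Set.mem_empty_iff_false, iff_false]
          rintro ⟨h1, h2, h3, -⟩
          exact hP ⟨h1, h2, h3⟩
        rw [hempty, measure_empty]
        simp
    choose Cf qf hCf hqf hbf using hGb
    set qs : ℝ≥0∞ := Finset.univ.sup qf with hqs
    set Cs : ℝ≥0∞ := ∑ i : I, Cf i with hCs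
    have hqs1 : qs < 1 := by
      rw [hqs]
      exact Finset.sup_lt_iff (by norm_num : (⊥ : ℝ≥0∞) < 1) |>.mpr fun i _ => hqf i
    have hCsT : Cs ≠ ⊤ := by
      rw [hCs]
      exact ENNReal.sum_ne_top.mpr fun i _ => hCf i
    have hFail : ∀ n, muI (ar := ar) (0 : K) p n
        {ω | ¬ ExtProp (0 : K) (interpOf ω) k} ≤ Cs * qs ^ n := by
      intro n
      have hsub : {ω : Atoms R ar (Fin n) → K × K | ¬ ExtProp (0 : K) (interpOf ω) k}
          ⊆ ⋃ i : I, G i n := by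
        intro ω hω
        simp only [ExtProp, mem_setOf_eq] at hω
        push_neg at hω
        obtain ⟨m', hm', ρ1, hρ1, ρ2, hρ2, hext2, a, hra, hfail⟩ := hω
        refine Set.mem_iUnion.mpr ⟨⟨⟨m', hm'⟩, ρ1, ρ2⟩, hρ1, hρ2, hext2, ?_⟩
        intro hall
        obtain ⟨b, hb1, hb2⟩ := hall a hra
        exact hfail b hb1 hb2
      calc muI (ar := ar) (0 : K) p n {ω | ¬ ExtProp (0 : K) (interpOf ω) k}
          ≤ muI (ar := ar) (0 : K) p n (⋃ i : I, G i n) := measure_mono hsub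
        _ ≤ ∑' i : I, muI (ar := ar) (0 : K) p n (G i n) := measure_iUnion_le _
        _ ≤ ∑' i : I, Cf i * qf i ^ n := ENNReal.tsum_le_tsum fun i => hbf i n
        _ = ∑ i : I, Cf i * qf i ^ n := tsum_fintype _
        _ ≤ ∑ i : I, Cf i * qs ^ n := by
            refine Finset.sum_le_sum fun i _ => ?_
            exact mul_le_mul_right (pow_le_pow_left₀ zero_le
              (Finset.le_sup (Finset.mem_univ i)) n) _
        _ = Cs * qs ^ n := by rw [hCs, Finset.sum_mul]
    refine expConv_of_bound _
      (fun n => muI (ar := ar) (0 : K) p n {ω | ¬ ExtProp (0 : K) (interpOf ω) k})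
      (fun n => prob_le_one) (fun n => ?_) hCsT hqs1 hFail
    calc (1 : ℝ≥0∞) = muI (ar := ar) (0 : K) p n Set.univ := measure_univ.symm
      _ ≤ muI (ar := ar) (0 : K) p n
            ({ω | ExtProp (0 : K) (interpOf ω) k} ∪ {ω | ¬ ExtProp (0 : K) (interpOf ω) k}) := by
          refine measure_mono fun ω _ => ?_
          by_cases h : ExtProp (0 : K) (interpOf ω) k
          · exact Or.inl h
          · exact Or.inr h
      _ ≤ _ := measure_union_le _ _
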